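/- arXiv:1901.01797 — 2 statements merged into one kernel-verified Lean document; each statement's English description precedes it below -/
import Mathlib

section
/- For every integer d ≥ 0, the class T_d of chordal ordered graphs with all left-degrees at most d is a Baker class. -/
set_option linter.unusedSectionVars false
set_option maxHeartbeats 1000000


/-- A layering of a simple graph: adjacent vertices differ by at most 1. -/
def IsLayering {V : Type*} (G : SimpleGraph V) (lam : V → ℤ) : Prop :=
  ∀ ⦃u v : V⦄, G.Adj u v → |lam u - lam v| ≤ 1

/-- The spanning subgraph of `G` keeping only the edges with both ends in `U`.
Reachability and distances between vertices of `U` in this graph coincide with those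
in the induced subgraph `G[U]`. -/
def restrictSet {V : Type*} (G : SimpleGraph V) (U : Set V) : SimpleGraph V where
  Adj u v := G.Adj u v ∧ u ∈ U ∧ v ∈ U
  symm := ⟨fun _ _ ⟨h, hu, hv⟩ => ⟨h.symm, hv, hu⟩⟩
  loopless := ⟨fun _ ⟨h, _, _⟩ => G.irrefl h⟩

/-- `BakerWins G t S r` : Destroyer wins the Baker game in at most `t` rounds on the state
whose ordered graph is the subgraph of `G` induced on `S` (with the inherited vertex order)
and whose sequence is `r` (0-indexed: `r 0` is the first term `r₁`).
If the vertex set is empty, Destroyer has won; otherwise he needs `t ≥ 1` and either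
(Delete) he wins on the graph minus its smallest vertex with the tail of the sequence, or
(Restrict) there is a layering `lam` of the current graph such that for every interval of
at most `r 0` consecutive integers, he wins on the induced subgraph on the corresponding
layers with the tail of the sequence. -/
def BakerWins {V : Type*} [LinearOrder V] (G : SimpleGraph V) :
    ℕ → Set V → (ℕ → ℕ) → Prop
  | 0, S, _ => S = ∅
  | t + 1, S, r => S = ∅ ∨
      ((∃ v ∈ S, (∀ u ∈ S, v ≤ u) ∧ BakerWins G t (S \ {v}) (fun i => r (i + 1))) ∨
       (∃ lam : V → ℤ,
          (∀ u ∈ S, ∀ w ∈ S, G.Adj u w → |lam u - lam w| ≤ 1) ∧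
          ∀ a b : ℤ, b + 1 ≤ a + (r 0 : ℤ) →
            BakerWins G t {v | v ∈ S ∧ lam v ∈ Set.Icc a b} (fun i => r (i + 1))))

/-- An ordered graph: a finite simple graph with a linear order on its vertices. -/
structure OrderedGraph : Type 1 where
  V : Type
  [fin : Fintype V]
  [ord : LinearOrder V]
  graph : SimpleGraph V

attribute [instance] OrderedGraph.fin OrderedGraph.ord

/-- A class of ordered graphs is a Baker class if for every infinite sequence of positive
integers `r` there is `t` such that Destroyer wins the Baker game on `(G, r)` in `t` rounds
for every `G` in the class. -/
def IsBakerClass (C : Set OrderedGraph) : Prop :=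
  ∀ r : ℕ → ℕ, (∀ i, 0 < r i) → ∃ t : ℕ, ∀ O ∈ C, BakerWins O.graph t Set.univ r

/-- A graph with an ordered vertex set is chordal (as an ordered graph) if for every
vertex `v` the neighbors of `v` smaller than `v` induce a clique. -/
def ChordalOrdered {V : Type*} [LinearOrder V] (G : SimpleGraph V) : Prop :=
  ∀ ⦃v u w : V⦄, G.Adj v u → G.Adj v w → u < v → w < v → u ≠ w → G.Adj u w

/-- The class `T_d` of chordal ordered graphs with all left-degrees at most `d`. -/
def Tclass (d : ℕ) : Set OrderedGraph :=
  {O | ChordalOrdered O.graph ∧ ∀ v : O.V, ({u | O.graph.Adj v u ∧ u < v}).ncard ≤ d}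

namespace BakerProof

variable {V : Type} [Fintype V] [LinearOrder V]

/-! ### Basic lemmas about `BakerWins` -/

lemma bw_empty (G : SimpleGraph V) (t : ℕ) (r : ℕ → ℕ) : BakerWins G t (∅ : Set V) r := by
  induction t generalizing r with
  | zero => simp [BakerWins]
  | succ t ih => exact Or.inl rfl

lemma bw_of_eq (G : SimpleGraph V) (t : ℕ) {S S' : Set V} (r : ℕ → ℕ) (h : S = S')
    (hw : BakerWins G t S r) : BakerWins G t S' r := h ▸ hw

lemma bw_mono (G : SimpleGraph V) {t t' : ℕ} (h : t ≤ t') {S : Set V} {r : ℕ → ℕ}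
    (hw : BakerWins G t S r) : BakerWins G t' S r := by
  induction t' generalizing t S r with
  | zero => exact (Nat.le_zero.mp h) ▸ hw
  | succ t' ih =>
    rcases Nat.eq_or_lt_of_le h with rfl | hlt
    · exact hw
    · cases t with
      | zero => exact Or.inl hw
      | succ t =>
        rcases hw with he | hd | hr
        · exact Or.inl he
        · rcases hd with ⟨v, hv, hmin, hw'⟩
          exact Or.inr (Or.inl ⟨v, hv, hmin, ih (Nat.le_of_succ_le_succ (Nat.le_of_lt hlt)) hw'⟩)
        · rcases hr with ⟨lam, hlay, hw'⟩
          exact Or.inr (Or.inr ⟨lam, hlay,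
            fun a b hab => ih (Nat.le_of_succ_le_succ (Nat.le_of_lt hlt)) (hw' a b hab)⟩)

/-! ### The `Good` predicate : vertices with a decreasing path to the bottom layer -/

/-- left neighbours of `v` inside `S` -/
def leftNbrs (G : SimpleGraph V) (S : Set V) (v : V) : Set V := {u | u ∈ S ∧ G.Adj u v ∧ u < v}

/-- A vertex of `S` is good if it is in the bottom layer (`mu v = 1`) or has a
smaller neighbour in `S` which is good. -/
inductive Good (G : SimpleGraph V) (mu : V → ℤ) (S : Set V) : V → Prop
  | base {v : V} : v ∈ S → mu v = 1 → Good G mu S v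
  | step {u v : V} : v ∈ S → u ∈ S → G.Adj u v → u < v → Good G mu S u → Good G mu S v

lemma good_witness {G : SimpleGraph V} {mu : V → ℤ} {S : Set V} {v : V}
    (h : Good G mu S v) (h1 : mu v ≠ 1) : (leftNbrs G S v).Nonempty := by
  cases h with
  | base hS hmu => exact absurd hmu h1
  | step hvS huS hadj hlt hg => exact ⟨_, huS, hadj, hlt⟩

lemma good_goodpart {G : SimpleGraph V} {mu : V → ℤ} {S : Set V} :
    ∀ v, Good G mu S v → Good G mu {x | x ∈ S ∧ Good G mu S x} v := by
  intro v hv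
  induction hv with
  | base hS hmu => exact Good.base ⟨hS, Good.base hS hmu⟩ hmu
  | step hvS huS hadj hlt hg ih =>
    exact Good.step ⟨hvS, Good.step hvS huS hadj hlt hg⟩ ⟨huS, hg⟩ hadj hlt ih

/-- neighbours of good vertices are good -/
lemma good_closure {G : SimpleGraph V} {mu : V → ℤ} {P S : Set V}
    (hSP : S ⊆ P)
    (pg1 : ∀ v ∈ P, 1 ≤ mu v)
    (pg3 : ∀ u ∈ P, ∀ v ∈ P, G.Adj u v → u < v → mu u ≤ mu v)
    (pg4 : ∀ v ∈ P, ∀ u ∈ P, ∀ w ∈ P, G.Adj v u → G.Adj v w → u < v → w < v → u ≠ w → G.Adj u w)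
    {v : V} (hv : Good G mu S v) : ∀ u, u ∈ S → G.Adj u v → Good G mu S u := by
  induction hv with
  | base hS hmu =>
    rename_i v
    intro u huS hadj
    rcases lt_trichotomy u v with hlt | heq | hgt
    · have h1 : mu u ≤ mu v := pg3 u (hSP huS) v (hSP hS) hadj hlt
      have h2 : 1 ≤ mu u := pg1 u (hSP huS)
      exact Good.base huS (by omega)
    · exact absurd (heq ▸ hadj) (G.irrefl)
    · exact Good.step huS hS hadj.symm hgt (Good.base hS hmu)
  | step hvS hwS hadj hlt hg ih =>
    rename_i w v
    intro u huS hadju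
    rcases lt_trichotomy u v with hult | heq | hgt
    · by_cases huw : u = w
      · exact huw ▸ hg
      · have hadjuw : G.Adj u w :=
          pg4 v (hSP hvS) u (hSP huS) w (hSP hwS) hadju.symm hadj.symm hult hlt huw
        exact ih u huS hadjuw
    · exact absurd (heq ▸ hadju) (G.irrefl)
    · exact Good.step huS hvS hadju.symm hgt (Good.step hvS hwS hadj hlt hg)

/-- every element of `S` that is good is `≥ b` provided all bottom-layer elements are. -/
lemma good_min {G : SimpleGraph V} {mu : V → ℤ} {S : Set V} {b : V}
    (hb : ∀ x, x ∈ S → mu x = 1 → b ≤ x)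
    (hAllGood : ∀ v ∈ S, Good G mu S v) : ∀ u ∈ S, b ≤ u := by
  intro u
  induction u using WellFoundedLT.induction with
  | _ u IH =>
    intro huS
    by_cases h1 : mu u = 1
    · exact hb u huS h1
    · obtain ⟨w, hwS, hadj, hlt⟩ := good_witness (hAllGood u huS) h1
      exact le_trans (IH w hlt hwS) hlt.le

/-! ### The extension of a bottom-layer layering to the whole playground -/

noncomputable local instance wfV : WellFoundedRelation V := ⟨(· < ·), IsWellFounded.wf⟩

noncomputable def leastLeft (G : SimpleGraph V) (S : Set V) (v : V)
    (h : (leftNbrs G S v).Nonempty) : V :=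
  (Set.toFinite (leftNbrs G S v)).toFinset.min' ((Set.Finite.toFinset_nonempty _).mpr h)

lemma leastLeft_mem (G : SimpleGraph V) (S : Set V) (v : V) (h : (leftNbrs G S v).Nonempty) :
    leastLeft G S v h ∈ leftNbrs G S v := by
  have := (Set.toFinite (leftNbrs G S v)).toFinset.min'_mem
    ((Set.Finite.toFinset_nonempty _).mpr h)
  rwa [Set.Finite.mem_toFinset] at this

lemma leastLeft_le (G : SimpleGraph V) (S : Set V) (v : V) (h : (leftNbrs G S v).Nonempty)
    {u : V} (hu : u ∈ leftNbrs G S v) : leastLeft G S v h ≤ u :=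
  (Set.toFinite (leftNbrs G S v)).toFinset.min'_le u ((Set.Finite.mem_toFinset _).mpr hu)

open scoped Classical in
noncomputable def extLam (G : SimpleGraph V) (mu : V → ℤ) (S : Set V) (lamB : V → ℤ) (v : V) : ℤ :=
  if mu v = 1 then lamB v
  else if h : (leftNbrs G S v).Nonempty then
    extLam G mu S lamB (leastLeft G S v h)
  else 0
termination_by v
decreasing_by
  exact (leastLeft_mem G S v h).2.2

lemma extLam_base (G : SimpleGraph V) (mu : V → ℤ) (S : Set V) (lamB : V → ℤ) (v : V)
    (h : mu v = 1) : extLam G mu S lamB v = lamB v := by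
  rw [extLam, if_pos h]

lemma extLam_step (G : SimpleGraph V) (mu : V → ℤ) (S : Set V) (lamB : V → ℤ) (v : V)
    (h : ¬ mu v = 1) (h2 : (leftNbrs G S v).Nonempty) :
    extLam G mu S lamB v = extLam G mu S lamB (leastLeft G S v h2) := by
  classical
  rw [extLam]
  simp only [if_neg h]
  rw [dif_pos h2]

/-- the key coherence lemma: the extension is a layering on an all-good state. -/
lemma extLam_layering {G : SimpleGraph V} {mu : V → ℤ} {P S : Set V} {lamB : V → ℤ}
    (hSP : S ⊆ P)
    (pg1 : ∀ v ∈ P, 1 ≤ mu v)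
    (pg3 : ∀ u ∈ P, ∀ v ∈ P, G.Adj u v → u < v → mu u ≤ mu v)
    (pg4 : ∀ v ∈ P, ∀ u ∈ P, ∀ w ∈ P, G.Adj v u → G.Adj v w → u < v → w < v → u ≠ w → G.Adj u w)
    (hAllGood : ∀ v ∈ S, Good G mu S v)
    (hlamB : ∀ u ∈ S, ∀ w ∈ S, mu u = 1 → mu w = 1 → G.Adj u w →
      |lamB u - lamB w| ≤ 1) :
    ∀ v, ∀ u, v ∈ S → u ∈ S → G.Adj u v → u < v →
      |extLam G mu S lamB u - extLam G mu S lamB v| ≤ 1 := by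
  intro v
  induction v using WellFoundedLT.induction with
  | _ v IH =>
    intro u hvS huS hadj hlt
    by_cases hv1 : mu v = 1
    · have hu1 : mu u = 1 := by
        have h1 : mu u ≤ mu v := pg3 u (hSP huS) v (hSP hvS) hadj hlt
        have h2 : 1 ≤ mu u := pg1 u (hSP huS)
        omega
      rw [extLam_base _ _ _ _ _ hv1, extLam_base _ _ _ _ _ hu1]
      exact hlamB u huS v hvS hu1 hv1 hadj
    · have hne : (leftNbrs G S v).Nonempty := good_witness (hAllGood v hvS) hv1
      set mv := leastLeft G S v hne with hmv
      have hmem : mv ∈ leftNbrs G S v := leastLeft_mem G S v hne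
      have hev : extLam G mu S lamB v = extLam G mu S lamB mv := extLam_step _ _ _ _ _ hv1 hne
      have hminle : mv ≤ u := leastLeft_le G S v hne ⟨huS, hadj, hlt⟩
      rcases eq_or_lt_of_le hminle with heq | hmlt
      · rw [hev, ← heq]
        simp
      · have hadj_mv_u : G.Adj mv u :=
          pg4 v (hSP hvS) mv (hSP hmem.1) u (hSP huS) hmem.2.1.symm hadj.symm hmem.2.2 hlt
            (ne_of_lt hmlt)
        by_cases hu1 : mu u = 1
        · have hmv1 : mu mv = 1 := by
            have h1 : mu mv ≤ mu u := pg3 mv (hSP hmem.1) u (hSP huS) hadj_mv_u hmlt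
            have h2 : 1 ≤ mu mv := pg1 mv (hSP hmem.1)
            omega
          rw [hev, extLam_base _ _ _ _ _ hu1, extLam_base _ _ _ _ _ hmv1]
          rw [abs_sub_comm]
          exact hlamB mv hmem.1 u huS hmv1 hu1 hadj_mv_u
        · have hneu : (leftNbrs G S u).Nonempty := good_witness (hAllGood u huS) hu1
          set mu' := leastLeft G S u hneu with hmu'
          have hmemu : mu' ∈ leftNbrs G S u := leastLeft_mem G S u hneu
          have heu : extLam G mu S lamB u = extLam G mu S lamB mu' :=
            extLam_step _ _ _ _ _ hu1 hneu
          have hle2 : mu' ≤ mv := leastLeft_le G S u hneu ⟨hmem.1, hadj_mv_u, hmlt⟩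
          rcases eq_or_lt_of_le hle2 with heq2 | hlt2
          · rw [hev, heu, heq2]
            simp
          · have hadj2 : G.Adj mu' mv :=
              pg4 u (hSP huS) mu' (hSP hmemu.1) mv (hSP hmem.1) hmemu.2.1.symm hadj_mv_u.symm
                hmemu.2.2 hmlt (ne_of_lt hlt2)
            have := IH mv hmem.2.2 mu' hmem.1 hmemu.1 hadj2 hlt2
            rw [hev, heu]
            exact this

/-! ### The composition lemma: playing an inner game on the bottom layer -/

lemma lemC (G : SimpleGraph V) (P : Set V) (mu : V → ℤ)
    (pg1 : ∀ v ∈ P, 1 ≤ mu v)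
    (pg3 : ∀ u ∈ P, ∀ v ∈ P, G.Adj u v → u < v → mu u ≤ mu v)
    (pg4 : ∀ v ∈ P, ∀ u ∈ P, ∀ w ∈ P, G.Adj v u → G.Adj v w → u < v → w < v → u ≠ w →
      G.Adj u w) :
    ∀ (tB : ℕ) (r : ℕ → ℕ) (T : ℕ),
    (∀ i, i ≤ 2*tB + 1 → ∀ S' : Set V, S' ⊆ P → (∀ v ∈ S', mu v ≠ 1) →
      BakerWins G T S' (fun k => r (k + i))) →
    ∀ S : Set V, S ⊆ P →
    BakerWins G tB {v | v ∈ S ∧ mu v = 1} (fun j => r (2*j+1)) →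
    BakerWins G (2*tB + T) S r := by
  classical
  intro tB
  induction tB with
  | zero =>
    intro r T HW S hS hBW
    have hempty : {v | v ∈ S ∧ mu v = 1} = ∅ := hBW
    have hne1 : ∀ v ∈ S, mu v ≠ 1 := fun v hv h1 =>
      (Set.eq_empty_iff_forall_notMem.mp hempty v) ⟨hv, h1⟩
    have h := HW 0 (by omega) S hS hne1
    have heq : (fun k => r (k + 0)) = r := by funext k; simp
    rw [heq] at h
    exact bw_mono G (by omega) h
  | succ tB IH =>
    intro r T HW S hS hBW
    -- abbreviations
    set Sg : Set V := {x | x ∈ S ∧ Good G mu S x} with hSgdef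
    have hSgS : Sg ⊆ S := fun x hx => hx.1
    have hSgP : Sg ⊆ P := fun x hx => hS hx.1
    have hAllGood : ∀ v ∈ Sg, Good G mu Sg v := fun v hv => by
      rw [hSgdef]; exact good_goodpart v hv.2
    have harith : 2*(tB+1) + T = (2*tB + T + 1) + 1 := by ring
    rw [harith]
    -- the flush move : restrict with the indicator layering of the good part
    refine Or.inr (Or.inr ⟨(fun v => if Good G mu S v then 0 else ((r 0 : ℤ) + 2)), ?_, ?_⟩)
    · -- legality of the flush layering: no good–bad edges
      intro u huS w hwS hadj
      beta_reduce
      have h1 : Good G mu S u → Good G mu S w := fun h =>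
        good_closure hS pg1 pg3 pg4 h w hwS hadj.symm
      have h2 : Good G mu S w → Good G mu S u := fun h =>
        good_closure hS pg1 pg3 pg4 h u huS hadj
      by_cases hGu : Good G mu S u
      · rw [if_pos hGu, if_pos (h1 hGu)]; simp
      · rw [if_neg hGu, if_neg (fun h => hGu (h2 h))]; simp
    · intro a b hab
      by_cases h0 : (0:ℤ) ∈ Set.Icc a b
      · -- the branch keeping the good part
        have hS1 : {v | v ∈ S ∧ (if Good G mu S v then 0 else ((r 0 : ℤ) + 2)) ∈ Set.Icc a b}
            = Sg := by
          ext v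
          simp only [Set.mem_setOf_eq, hSgdef]
          constructor
          · rintro ⟨hvS, hIcc⟩
            by_cases hg : Good G mu S v
            · exact ⟨hvS, hg⟩
            · rw [if_neg hg] at hIcc
              simp only [Set.mem_Icc] at hIcc h0 hab
              omega
          · rintro ⟨hvS, hg⟩
            exact ⟨hvS, by rw [if_pos hg]; exact h0⟩
        rw [hS1]
        -- continuation: play the actual inner move on the good part
        rcases hBW with hempty | ⟨b0, hb0, hbmin, hBW'⟩ | ⟨lamB, hlamB, hsub⟩
        · -- inner state empty: all of S (hence Sg) avoids the bottom layer
          have hne1 : ∀ v ∈ Sg, mu v ≠ 1 := fun v hv h1 =>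
            (Set.eq_empty_iff_forall_notMem.mp hempty v) ⟨hSgS hv, h1⟩
          exact bw_mono G (by omega) (HW 1 (by omega) Sg hSgP hne1)
        · -- inner Delete move
          have hb0' : b0 ∈ S ∧ mu b0 = 1 := hb0
          refine Or.inr (Or.inl ⟨b0, ⟨hb0'.1, Good.base hb0'.1 hb0'.2⟩, ?_, ?_⟩)
          · exact good_min (fun x hx h1 => hbmin x ⟨hSgS hx, h1⟩) hAllGood
          · -- apply the induction hypothesis after the deletion
            have hseq2 : ∀ (c : ℕ), (fun k => r (k + 1 + 1 + c)) = (fun k => (fun k => r (k+2)) (k + c)) := by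
              intro c; funext k; congr 1 <;> ring
            have hIH := IH (fun k => r (k+2)) T ?_ (Sg \ {b0}) (fun x hx => hSgP hx.1) ?_
            · have : (fun i => (fun i => r (i + 1)) (i + 1)) = (fun k => r (k+2)) := by
                funext k; congr 1 <;> ring
              rw [this]
              exact hIH
            · intro i hi S' hS'P hS'ne
              have h := HW (i+2) (by omega) S' hS'P hS'ne
              have : (fun k => r (k + (i+2))) = (fun k => (fun k => r (k+2)) (k + i)) := by
                funext k; congr 1 <;> ring
              rwa [this] at h
            · have hset : {v | v ∈ S ∧ mu v = 1} \ {b0} = {v | v ∈ Sg \ {b0} ∧ mu v = 1} := by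
                ext v
                simp only [Set.mem_diff, Set.mem_setOf_eq, Set.mem_singleton_iff, hSgdef]
                constructor
                · rintro ⟨⟨hvS, h1⟩, hne⟩
                  exact ⟨⟨⟨hvS, Good.base hvS h1⟩, hne⟩, h1⟩
                · rintro ⟨⟨⟨hvS, _⟩, hne⟩, h1⟩
                  exact ⟨⟨hvS, h1⟩, hne⟩
              have hseq : (fun i => (fun j => r (2*j+1)) (i + 1)) = (fun j => (fun k => r (k+2)) (2*j+1)) := by
                funext k; show r (2*(k+1)+1) = r (2*k+1+2); congr 1 <;> ring
              rw [hset, hseq] at hBW'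
              exact hBW'
        · -- inner Restrict move
          refine Or.inr (Or.inr ⟨extLam G mu Sg lamB, ?_, ?_⟩)
          · -- legality of the extension layering
            have key := extLam_layering hSgP pg1 pg3 pg4 hAllGood
              (fun u hu w hw h1u h1w hadj => hlamB u ⟨hSgS hu, h1u⟩ w ⟨hSgS hw, h1w⟩ hadj)
            intro u huSg w hwSg hadj
            rcases lt_trichotomy u w with hlt | heq | hgt
            · exact key w u hwSg huSg hadj hlt
            · exact absurd (heq ▸ hadj) (G.irrefl)
            · rw [abs_sub_comm]
              exact key u w huSg hwSg hadj.symm hgt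
          · intro a' b' hab'
            have hab'' : b' + 1 ≤ a' + ((fun j => r (2*j+1)) 0 : ℤ) := by
              have : (fun j => r (2*j+1)) 0 = (fun i => r (i+1)) 0 := by norm_num
              rw [this]
              exact hab'
            have hinner := hsub a' b' hab''
            have hIH := IH (fun k => r (k+2)) T ?_
              {v | v ∈ Sg ∧ extLam G mu Sg lamB v ∈ Set.Icc a' b'}
              (fun x hx => hSgP hx.1) ?_
            · have : (fun i => (fun i => r (i + 1)) (i + 1)) = (fun k => r (k+2)) := by
                funext k; congr 1 <;> ring
              rw [this]
              exact hIH
            · intro i hi S' hS'P hS'ne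
              have h := HW (i+2) (by omega) S' hS'P hS'ne
              have : (fun k => r (k + (i+2))) = (fun k => (fun k => r (k+2)) (k + i)) := by
                funext k; congr 1 <;> ring
              rwa [this] at h
            · have hset : {v | v ∈ {v | v ∈ S ∧ mu v = 1} ∧ lamB v ∈ Set.Icc a' b'}
                  = {v | v ∈ {v | v ∈ Sg ∧ extLam G mu Sg lamB v ∈ Set.Icc a' b'} ∧ mu v = 1} := by
                ext v
                simp only [Set.mem_setOf_eq, hSgdef]
                constructor
                · rintro ⟨⟨hvS, h1⟩, hIcc⟩
                  refine ⟨⟨⟨hvS, Good.base hvS h1⟩, ?_⟩, h1⟩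
                  rwa [extLam_base _ _ _ _ _ h1]
                · rintro ⟨⟨⟨hvS, _⟩, hIcc⟩, h1⟩
                  rw [extLam_base _ _ _ _ _ h1] at hIcc
                  exact ⟨⟨hvS, h1⟩, hIcc⟩
              have hseq : (fun i => (fun j => r (2*j+1)) (i + 1)) = (fun j => (fun k => r (k+2)) (2*j+1)) := by
                funext k; show r (2*(k+1)+1) = r (2*k+1+2); congr 1 <;> ring
              rw [hset, hseq] at hinner
              exact hinner
      · by_cases hM : ((r 0:ℤ)+2) ∈ Set.Icc a b
        · -- the branch containing the flushed bad part
          set S1 := {v | v ∈ S ∧ (if Good G mu S v then 0 else ((r 0 : ℤ) + 2)) ∈ Set.Icc a b}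
            with hS1def
          have hS1P : S1 ⊆ P := fun v hv => hS hv.1
          have hgood1 : ∀ v ∈ S1, mu v ≠ 1 := by
            intro v hv h1
            have hg : Good G mu S v := Good.base hv.1 h1
            have := hv.2
            rw [if_pos hg] at this
            exact h0 this
          exact bw_mono G (by omega) (HW 1 (by omega) S1 hS1P hgood1)
        · -- empty branch
          have : {v | v ∈ S ∧ (if Good G mu S v then 0 else ((r 0 : ℤ) + 2)) ∈ Set.Icc a b}
              = (∅ : Set V) := by
            ext v
            simp only [Set.mem_setOf_eq, Set.mem_empty_iff_false, iff_false, not_and]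
            intro hvS hIcc
            by_cases hg : Good G mu S v
            · rw [if_pos hg] at hIcc; exact h0 hIcc
            · rw [if_neg hg] at hIcc; exact hM hIcc
          rw [this]
          exact bw_empty G _ _

/-! ### BFS layerings of chordal ordered graphs -/

section BFS

variable (H : SimpleGraph V)

noncomputable def rootOf (v : V) : V :=
  (Set.toFinite {u | H.Reachable u v}).toFinset.min'
    ((Set.Finite.toFinset_nonempty _).mpr ⟨v, SimpleGraph.Reachable.refl v⟩)

lemma rootOf_reach (v : V) : H.Reachable (rootOf H v) v := by
  have := (Set.toFinite {u | H.Reachable u v}).toFinset.min'_mem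
    ((Set.Finite.toFinset_nonempty _).mpr ⟨v, SimpleGraph.Reachable.refl v⟩)
  rwa [Set.Finite.mem_toFinset] at this

lemma rootOf_le {u v : V} (h : H.Reachable u v) : rootOf H v ≤ u :=
  (Set.toFinite {u | H.Reachable u v}).toFinset.min'_le u ((Set.Finite.mem_toFinset _).mpr h)

lemma rootOf_eq_of_reach {u v : V} (h : H.Reachable u v) : rootOf H u = rootOf H v :=
  le_antisymm (rootOf_le H ((rootOf_reach H v).trans h.symm))
    (rootOf_le H ((rootOf_reach H u).trans h))

lemma dist_tri {u v w : V} (h1 : H.Reachable u v) (h2 : H.Reachable v w) :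
    H.dist u w ≤ H.dist u v + H.dist v w := by
  obtain ⟨p, hp⟩ := h1.exists_walk_length_eq_dist
  obtain ⟨q, hq⟩ := h2.exists_walk_length_eq_dist
  have := H.dist_le (p.append q)
  rwa [SimpleGraph.Walk.length_append, hp, hq] at this

/-- The BFS layering of each component from its minimal vertex. -/
noncomputable def bfsMu (v : V) : ℤ := (H.dist (rootOf H v) v : ℤ)

lemma bfsMu_layering {u v : V} (h : H.Adj u v) : |bfsMu H u - bfsMu H v| ≤ 1 := by
  have hroot : rootOf H u = rootOf H v := rootOf_eq_of_reach H h.reachable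
  have h1 : H.dist (rootOf H v) u ≤ H.dist (rootOf H v) v + 1 := by
    have htri := dist_tri H (rootOf_reach H v) h.symm.reachable
    rwa [SimpleGraph.dist_eq_one_iff_adj.mpr h.symm] at htri
  have h2 : H.dist (rootOf H v) v ≤ H.dist (rootOf H v) u + 1 := by
    have htri := dist_tri H (hroot ▸ rootOf_reach H u) h.reachable
    rwa [SimpleGraph.dist_eq_one_iff_adj.mpr h] at htri
  unfold bfsMu
  rw [hroot]
  rw [abs_le]
  omega

lemma bfsMu_zero_iff {v : V} : bfsMu H v = 0 ↔ rootOf H v = v := by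
  unfold bfsMu
  rw [Int.natCast_eq_zero]
  exact (rootOf_reach H v).dist_eq_zero_iff

end BFS

section BFSWitness

variable (G : SimpleGraph V) (S₀ : Set V)

local notation "H" => restrictSet G S₀

lemma restrict_adj {u v : V} : (H).Adj u v ↔ G.Adj u v ∧ u ∈ S₀ ∧ v ∈ S₀ := Iff.rfl

variable (hchord : ∀ v ∈ S₀, ∀ u ∈ S₀, ∀ w ∈ S₀,
    G.Adj v u → G.Adj v w → u < v → w < v → u ≠ w → G.Adj u w)

include hchord

/-- every non-root vertex has a smaller neighbour one BFS layer below. -/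
lemma bfs_witness : ∀ n : ℕ, ∀ v ∈ S₀, (H).dist (rootOf H v) v = n → 1 ≤ n →
    ∃ w, w ∈ S₀ ∧ G.Adj w v ∧ w < v ∧ (H).dist (rootOf H v) w + 1 = n := by
  intro n
  induction n using Nat.strong_induction_on with
  | _ n IH =>
    intro v hv hdist hn
    have hvne : v ≠ rootOf H v := by
      intro heq
      rw [← heq] at hdist
      rw [SimpleGraph.dist_self] at hdist
      omega
    obtain ⟨p, hp⟩ := ((rootOf_reach H v).symm).exists_walk_length_eq_dist
    obtain ⟨x, hadj, q, hpq⟩ := p.exists_eq_cons_of_ne hvne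
    have hlenq : q.length = n - 1 := by
      have : p.length = (H).dist v (rootOf H v) := hp
      rw [hpq] at this
      rw [SimpleGraph.Walk.length_cons] at this
      rw [SimpleGraph.dist_comm, hdist] at this
      omega
    have hx : x ∈ S₀ := hadj.2.2
    have hdx : (H).dist (rootOf H v) x = n - 1 := by
      have hle : (H).dist (rootOf H v) x ≤ n - 1 := by
        have := (H).dist_le q.reverse
        rw [SimpleGraph.Walk.length_reverse, hlenq] at this
        exact this
      have hge : n ≤ (H).dist (rootOf H v) x + 1 := by
        have htri := dist_tri (H) (q.reverse.reachable) hadj.symm.reachable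
        rw [SimpleGraph.dist_eq_one_iff_adj.mpr hadj.symm, hdist] at htri
        exact htri
      omega
    have hrx : rootOf H x = rootOf H v := rootOf_eq_of_reach (H) hadj.symm.reachable
    rcases lt_trichotomy x v with hlt | heq | hgt
    · exact ⟨x, hx, hadj.1.symm, hlt, by omega⟩
    · exact absurd (heq ▸ hadj) ((H).irrefl)
    · -- x > v is impossible by chordality
      exfalso
      have hn2 : 2 ≤ n := by
        rcases Nat.lt_or_ge n 2 with h2 | h2
        · have hn1 : n = 1 := by omega
          have : (H).dist (rootOf H v) x = 0 := by omega
          have hxr : rootOf H v = x := by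
            have hr : (H).Reachable (rootOf H v) x := by
              have h1 : (H).Reachable v x := hadj.reachable
              exact (rootOf_reach H v).trans h1
            exact hr.dist_eq_zero_iff.mp this
          have hle : rootOf H v ≤ v := rootOf_le (H) (SimpleGraph.Reachable.refl v)
          exact absurd hgt (not_lt.mpr (hxr ▸ hle))
        · exact h2
      obtain ⟨y, hy, hyadj, hylt, hydist⟩ := IH (n-1) (by omega) x hx (hrx ▸ hdx) (by omega)
      rw [hrx] at hydist
      have hyne : y ≠ v := by
        intro heq
        rw [heq, hdist] at hydist
        omega
      have hADJ : G.Adj y v :=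
        hchord x hx y hy v hv hyadj.symm (hadj.1).symm hylt hgt hyne
      have hHyx : (H).Adj y x := ⟨hyadj, hy, hx⟩
      have hHyv : (H).Adj y v := ⟨hADJ, hy, hv⟩
      have hreach_ry : (H).Reachable (rootOf H v) y :=
        ((rootOf_reach H v).trans hadj.reachable).trans hHyx.symm.reachable
      have htri := dist_tri (H) hreach_ry hHyv.reachable
      rw [SimpleGraph.dist_eq_one_iff_adj.mpr hHyv] at htri
      omega

/-- smaller neighbours never live on a higher BFS layer. -/
lemma bfs_up : ∀ v ∈ S₀, ∀ u ∈ S₀, G.Adj u v → u < v → bfsMu (H) u ≤ bfsMu (H) v := by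
  intro v hv u hu hadj hlt
  by_contra hcon
  have hHadj : (H).Adj u v := ⟨hadj, hu, hv⟩
  have hlay := bfsMu_layering (H) hHadj
  have heq : bfsMu (H) u = bfsMu (H) v + 1 := by
    rw [abs_le] at hlay
    omega
  have hroot : rootOf H u = rootOf H v := rootOf_eq_of_reach (H) hHadj.reachable
  by_cases h0 : bfsMu (H) v = 0
  · -- v is the root of its component, contradicting u < v
    have hrv : rootOf H v = v := (bfsMu_zero_iff (H)).mp h0
    have : rootOf H u ≤ u := rootOf_le (H) (SimpleGraph.Reachable.refl u)
    rw [hroot, hrv] at this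
    exact absurd hlt (not_lt.mpr this)
  · -- v has a witness below, contradicting chordality
    have hpos : 1 ≤ (H).dist (rootOf H v) v := by
      unfold bfsMu at h0
      omega
    obtain ⟨w, hw, hwadj, hwlt, hwdist⟩ := bfs_witness G S₀ hchord _ v hv rfl hpos
    have hwne : u ≠ w := by
      intro hEq
      have : bfsMu (H) w = bfsMu (H) v - 1 := by
        unfold bfsMu
        have hrw : rootOf H w = rootOf H v := rootOf_eq_of_reach (H) (SimpleGraph.Adj.reachable (show (H).Adj w v from ⟨hwadj, hw, hv⟩))
        rw [hrw]
        unfold bfsMu at *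
        omega
      rw [← hEq] at this
      omega
    have hADJ : G.Adj u w := hchord v hv u hu w hw hadj.symm hwadj.symm hlt hwlt hwne
    have hlay2 := bfsMu_layering (H) (⟨hADJ, hu, hw⟩ : (H).Adj u w)
    have hrw : rootOf H w = rootOf H v := rootOf_eq_of_reach (H) (SimpleGraph.Adj.reachable (show (H).Adj w v from ⟨hwadj, hw, hv⟩))
    have hw1 : bfsMu (H) w = bfsMu (H) v - 1 := by
      unfold bfsMu
      rw [hrw]
      unfold bfsMu at *
      omega
    rw [abs_le] at hlay2
    omega

/-- the number of smaller neighbours on the same BFS layer drops by one. -/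
lemma bfs_count (e : ℕ)
    (hdeg : ∀ v ∈ S₀, ({u | u ∈ S₀ ∧ G.Adj v u ∧ u < v}).ncard ≤ e + 1) :
    ∀ v ∈ S₀, ({u | u ∈ S₀ ∧ G.Adj v u ∧ u < v ∧ bfsMu (H) u = bfsMu (H) v}).ncard ≤ e := by
  intro v hv
  by_cases h0 : bfsMu (H) v = 0
  · -- v is the root: no smaller neighbours at all
    have hrv : rootOf H v = v := (bfsMu_zero_iff (H)).mp h0
    have : {u | u ∈ S₀ ∧ G.Adj v u ∧ u < v ∧ bfsMu (H) u = bfsMu (H) v} = (∅ : Set V) := by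
      ext u
      simp only [Set.mem_setOf_eq, Set.mem_empty_iff_false, iff_false, not_and]
      intro hu hadj hlt _
      have : rootOf H u ≤ u := rootOf_le (H) (SimpleGraph.Reachable.refl u)
      have hroot : rootOf H u = rootOf H v :=
        rootOf_eq_of_reach (H) (SimpleGraph.Adj.reachable (show (H).Adj u v from ⟨hadj.symm, hu, hv⟩))
      rw [hroot, hrv] at this
      exact absurd hlt (not_lt.mpr this)
    rw [this]
    simp
  · have hpos : 1 ≤ (H).dist (rootOf H v) v := by
      unfold bfsMu at h0
      omega
    obtain ⟨w, hw, hwadj, hwlt, hwdist⟩ := bfs_witness G S₀ hchord _ v hv rfl hpos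
    have hrw : rootOf H w = rootOf H v :=
      rootOf_eq_of_reach (H) (SimpleGraph.Adj.reachable (show (H).Adj w v from ⟨hwadj, hw, hv⟩))
    have hwmu : bfsMu (H) w ≠ bfsMu (H) v := by
      unfold bfsMu
      rw [hrw]
      omega
    have hsub : {u | u ∈ S₀ ∧ G.Adj v u ∧ u < v ∧ bfsMu (H) u = bfsMu (H) v}
        ⊆ {u | u ∈ S₀ ∧ G.Adj v u ∧ u < v} \ {w} := by
      rintro u ⟨hu, hadj, hlt, hmu⟩
      refine ⟨⟨hu, hadj, hlt⟩, ?_⟩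
      simp only [Set.mem_singleton_iff]
      intro hEq
      rw [hEq] at hmu
      exact hwmu hmu
    have hwA : w ∈ {u | u ∈ S₀ ∧ G.Adj v u ∧ u < v} := ⟨hw, hwadj.symm, hwlt⟩
    calc ({u | u ∈ S₀ ∧ G.Adj v u ∧ u < v ∧ bfsMu (H) u = bfsMu (H) v}).ncard
        ≤ ({u | u ∈ S₀ ∧ G.Adj v u ∧ u < v} \ {w}).ncard :=
          Set.ncard_le_ncard hsub (Set.toFinite _)
      _ ≤ e := by
          have := Set.ncard_diff_singleton_add_one hwA (Set.toFinite _)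
          have h2 := hdeg v hv
          omega

end BFSWitness

/-! ### The main induction -/

/-- Destroyer wins uniformly on all induced subgraphs that are chordal ordered with
left-degree at most `e`. -/
def AlemStmt (e : ℕ) : Prop :=
  ∀ r : ℕ → ℕ, (∀ i, 0 < r i) → ∃ t : ℕ,
    ∀ (V : Type) [Fintype V] [LinearOrder V], ∀ (G : SimpleGraph V) (S₀ : Set V),
      (∀ v ∈ S₀, ∀ u ∈ S₀, ∀ w ∈ S₀,
        G.Adj v u → G.Adj v w → u < v → w < v → u ≠ w → G.Adj u w) →
      (∀ v ∈ S₀, ({u | u ∈ S₀ ∧ G.Adj v u ∧ u < v}).ncard ≤ e) →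
      BakerWins G t S₀ r

/-- Destroyer wins uniformly on all states inside a playground of width `m` with
same-layer left-degree at most `e`. -/
def WlemStmt (e m : ℕ) : Prop :=
  ∀ r : ℕ → ℕ, (∀ i, 0 < r i) → ∃ t : ℕ,
    ∀ (V : Type) [Fintype V] [LinearOrder V], ∀ (G : SimpleGraph V) (P : Set V) (mu : V → ℤ),
      (∀ v ∈ P, 1 ≤ mu v ∧ mu v ≤ (m:ℤ)) →
      (∀ u ∈ P, ∀ v ∈ P, G.Adj u v → u < v → mu u ≤ mu v) →
      (∀ v ∈ P, ∀ u ∈ P, ∀ w ∈ P,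
        G.Adj v u → G.Adj v w → u < v → w < v → u ≠ w → G.Adj u w) →
      (∀ v ∈ P, ({u | u ∈ P ∧ G.Adj v u ∧ u < v ∧ mu u = mu v}).ncard ≤ e) →
      ∀ S : Set V, S ⊆ P → BakerWins G t S r

lemma wlem (e : ℕ) (hA : AlemStmt e) : ∀ m, WlemStmt e m := by
  intro m
  induction m with
  | zero =>
    intro r hpos
    refine ⟨0, ?_⟩
    intro V i1 i2 G P mu pg1 pg3 pg4 pg5 S hS
    have hSempty : S = ∅ := by
      ext v
      simp only [Set.mem_empty_iff_false, iff_false]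
      intro hv
      have := pg1 v (hS hv)
      simp only [Nat.cast_zero] at this
      omega
    exact hSempty
  | succ m IH =>
    intro r hpos
    obtain ⟨tB, hAspec⟩ := hA (fun j => r (2*j+1)) (fun j => hpos _)
    choose tf htf using fun i => IH (fun k => r (k + i)) (fun k => hpos _)
    refine ⟨2*tB + Finset.sup (Finset.range (2*tB+2)) tf, ?_⟩
    intro V i1 i2 G P mu pg1 pg3 pg4 pg5 S hS
    refine lemC G P mu (fun v hv => (pg1 v hv).1) pg3 pg4 tB r _ ?_ S hS ?_
    · -- leaf handler: the playground one level up
      intro i hi S' hS'P hS'ne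
      have happ := htf i V G {v | v ∈ P ∧ mu v ≠ 1} (fun v => mu v - 1) ?_ ?_ ?_ ?_ S' ?_
      · exact bw_mono G (Finset.le_sup (Finset.mem_range.mpr (by omega))) happ
      · intro v hv
        have h1 := pg1 v hv.1
        have h2 := hv.2
        push_cast at h1 ⊢
        omega
      · intro u hu v hv hadj hlt
        have := pg3 u hu.1 v hv.1 hadj hlt
        show mu u - 1 ≤ mu v - 1
        omega
      · intro v hv u hu w hw h1 h2 h3 h4 h5
        exact pg4 v hv.1 u hu.1 w hw.1 h1 h2 h3 h4 h5
      · intro v hv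
        refine le_trans (Set.ncard_le_ncard ?_ (Set.toFinite _)) (pg5 v hv.1)
        rintro u ⟨hu, hadj, hlt, hmu⟩
        have hmu' : mu u - 1 = mu v - 1 := hmu
        exact ⟨hu.1, hadj, hlt, by omega⟩
      · exact fun v hv => ⟨hS'P hv, hS'ne v hv⟩
    · -- the inner game on the bottom layer
      refine hAspec V G {v | v ∈ S ∧ mu v = 1} ?_ ?_
      · intro v hv u hu w hw h1 h2 h3 h4 h5
        exact pg4 v (hS hv.1) u (hS hu.1) w (hS hw.1) h1 h2 h3 h4 h5
      · intro v hv
        refine le_trans (Set.ncard_le_ncard ?_ (Set.toFinite _)) (pg5 v (hS hv.1))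
        rintro u ⟨hu, hadj, hlt⟩
        exact ⟨hS hu.1, hadj, hlt, by rw [hu.2, hv.2]⟩

lemma alemZero : AlemStmt 0 := by
  intro r hpos
  refine ⟨2, ?_⟩
  intro V i1 i2 G S₀ hchord hdeg
  have hnoedge : ∀ u ∈ S₀, ∀ w ∈ S₀, ¬ G.Adj u w := by
    have key : ∀ u ∈ S₀, ∀ w ∈ S₀, u < w → ¬ G.Adj u w := by
      intro u hu w hw hlt hadj
      have hmem : u ∈ {x | x ∈ S₀ ∧ G.Adj w x ∧ x < w} := ⟨hu, hadj.symm, hlt⟩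
      have h0 := hdeg w hw
      have : ({x | x ∈ S₀ ∧ G.Adj w x ∧ x < w}).ncard = 0 := by omega
      rw [Set.ncard_eq_zero (Set.toFinite _)] at this
      rw [this] at hmem
      exact hmem
    intro u hu w hw hadj
    rcases lt_trichotomy u w with hlt | heq | hgt
    · exact key u hu w hw hlt hadj
    · exact (heq ▸ hadj).ne rfl
    · exact key w hw u hu hgt hadj.symm
  refine Or.inr (Or.inr ⟨fun v => ((Fintype.equivFin V v : ℕ) : ℤ) * ((r 0 : ℤ) + 1), ?_, ?_⟩)
  · intro u hu w hw hadj
    exact absurd hadj (hnoedge u hu w hw)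
  · intro a b hab
    set lam : V → ℤ := fun v => ((Fintype.equivFin V v : ℕ) : ℤ) * ((r 0 : ℤ) + 1) with hlam
    set S1 : Set V := {v | v ∈ S₀ ∧ lam v ∈ Set.Icc a b} with hS1
    have hone : ∀ x ∈ S1, ∀ y ∈ S1, x = y := by
      have key : ∀ x ∈ S1, ∀ y ∈ S1,
          ((Fintype.equivFin V x : ℕ) : ℤ) < ((Fintype.equivFin V y : ℕ) : ℤ) → False := by
        intro x hx y hy hlt
        have hx2 : a ≤ lam x ∧ lam x ≤ b := hx.2
        have hy2 : a ≤ lam y ∧ lam y ≤ b := hy.2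
        have hexp : (((Fintype.equivFin V x : ℕ) : ℤ) + 1) * ((r 0 : ℤ) + 1)
            = lam x + ((r 0 : ℤ) + 1) := by rw [hlam]; ring
        have hstep : (((Fintype.equivFin V x : ℕ) : ℤ) + 1) * ((r 0 : ℤ) + 1) ≤ lam y := by
          rw [hlam]
          have hr0 : (0:ℤ) ≤ (r 0 : ℤ) + 1 := by positivity
          exact mul_le_mul_of_nonneg_right (by omega) hr0
        rw [hexp] at hstep
        omega
      intro x hx y hy
      by_contra hne
      have : (Fintype.equivFin V x : ℕ) ≠ (Fintype.equivFin V y : ℕ) := by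
        intro h
        exact hne ((Fintype.equivFin V).injective (Fin.ext h))
      rcases Nat.lt_or_ge (Fintype.equivFin V x : ℕ) (Fintype.equivFin V y : ℕ) with h | h
      · exact key x hx y hy (by exact_mod_cast h)
      · exact key y hy x hx (by omega)
    rcases Set.eq_empty_or_nonempty S1 with hemp | ⟨x, hx⟩
    · exact bw_of_eq G _ _ hemp.symm (bw_empty G _ _)
    · refine Or.inr (Or.inl ⟨x, hx, fun u hu => le_of_eq (hone x hx u hu), ?_⟩)
      show S1 \ {x} = ∅
      ext y
      simp only [Set.mem_diff, Set.mem_singleton_iff, Set.mem_empty_iff_false, iff_false, not_and]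
      intro hy hne
      exact absurd (hone y hy x hx) hne

lemma alemSucc (e : ℕ) (hW : ∀ m, WlemStmt e m) : AlemStmt (e+1) := by
  intro r hpos
  obtain ⟨tW, hWspec⟩ := hW (r 0) (fun k => r (k+1)) (fun k => hpos _)
  refine ⟨tW + 1, ?_⟩
  intro V i1 i2 G S₀ hchord hdeg
  refine Or.inr (Or.inr ⟨bfsMu (restrictSet G S₀), ?_, ?_⟩)
  · intro u hu w hw hadj
    exact bfsMu_layering _ (show (restrictSet G S₀).Adj u w from ⟨hadj, hu, hw⟩)
  · intro a b hab
    have hPbS : {v | v ∈ S₀ ∧ bfsMu (restrictSet G S₀) v ∈ Set.Icc a b} ⊆ S₀ :=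
      fun v hv => hv.1
    refine hWspec V G {v | v ∈ S₀ ∧ bfsMu (restrictSet G S₀) v ∈ Set.Icc a b}
      (fun v => bfsMu (restrictSet G S₀) v - a + 1) ?_ ?_ ?_ ?_ _ (subset_refl _)
    · intro v hv
      have h2 := hv.2
      simp only [Set.mem_Icc] at h2
      constructor
      · show 1 ≤ bfsMu (restrictSet G S₀) v - a + 1
        omega
      · show bfsMu (restrictSet G S₀) v - a + 1 ≤ ((r 0 : ℕ) : ℤ)
        omega
    · intro u hu v hv hadj hlt
      have := bfs_up G S₀ hchord v (hPbS hv) u (hPbS hu) hadj hlt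
      show bfsMu (restrictSet G S₀) u - a + 1 ≤ bfsMu (restrictSet G S₀) v - a + 1
      omega
    · intro v hv u hu w hw h1 h2 h3 h4 h5
      exact hchord v (hPbS hv) u (hPbS hu) w (hPbS hw) h1 h2 h3 h4 h5
    · intro v hv
      have hcnt := bfs_count G S₀ hchord e hdeg v (hPbS hv)
      refine le_trans (Set.ncard_le_ncard ?_ (Set.toFinite _)) hcnt
      rintro u ⟨hu, hadj, hlt, hmu⟩
      have hmu' : bfsMu (restrictSet G S₀) u - a + 1 = bfsMu (restrictSet G S₀) v - a + 1 := hmu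
      exact ⟨hPbS hu, hadj, hlt, by omega⟩

lemma alem : ∀ e, AlemStmt e := by
  intro e
  induction e with
  | zero => exact alemZero
  | succ e ih => exact alemSucc e (wlem e ih)

end BakerProof


/-- For every integer `d ≥ 0`, the class `T_d` of chordal ordered graphs with all
left-degrees at most `d` is a Baker class. -/
theorem stmt_7 (d : ℕ) : IsBakerClass (Tclass d) := by
  intro r hpos
  obtain ⟨t, ht⟩ := BakerProof.alem d r hpos
  refine ⟨t, ?_⟩
  rintro O ⟨hchord, hdeg⟩
  refine ht O.V O.graph Set.univ ?_ ?_
  · intro v _ u _ w _ h1 h2 h3 h4 h5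
    exact hchord h1 h2 h3 h4 h5
  · intro v _
    refine le_trans (Set.ncard_le_ncard ?_ (Set.toFinite _)) (hdeg v)
    rintro u ⟨_, hadj, hlt⟩
    exact ⟨hadj, hlt⟩
end

section
/- Let d ≥ 1 be an integer, let G be a connected chordal ordered graph with all left-degrees at most d, let v be the smallest vertex of G, and let λ be the BFS layering of G starting from v. Then for every integer j ≥ 1, every vertex u with λ(u) = j has a neighbor w with λ(w) = j − 1 and w smaller than u; consequently, the induced ordered subgraph G[λ⁻¹(j)] is a chordal ordered graph with all left-degrees at most d − 1, i.e., G[λ⁻¹(j)] ∈ T_{d−1}. -/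
/-- The induced ordered subgraph on a set of vertices, with the inherited order. -/
noncomputable def OrderedGraph.induce (O : OrderedGraph) (S : Set O.V) : OrderedGraph where
  V := ↥S
  fin := S.toFinite.fintype
  graph := O.graph.induce S

/-- `C` is the vertex set of a connected component of `G − B`. -/
def IsComponentOf {V : Type*} (G : SimpleGraph V) (B C : Set V) : Prop :=
  ∃ x, x ∉ B ∧ C = {y | (restrictSet G Bᶜ).Reachable x y}

/-- The clique-sum class `C₁ ⊕ C₂`: ordered graphs `G` with a base `B ⊆ V(G)` such that
`G[B] ∈ C₁` and for every connected component `C` of `G − B`: `G[C] ∈ C₂`, the set of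
vertices of `B` with a neighbor in `C` induces a clique, and all its vertices are smaller
than all vertices of `C`. -/
def CliqueSum (C₁ C₂ : Set OrderedGraph) : Set OrderedGraph :=
  {O | ∃ B : Set O.V, O.induce B ∈ C₁ ∧
    ∀ C : Set O.V, IsComponentOf O.graph B C →
      O.induce C ∈ C₂ ∧
      (∀ x ∈ B, (∃ c ∈ C, O.graph.Adj x c) →
        ∀ y ∈ B, (∃ c ∈ C, O.graph.Adj y c) → x ≠ y → O.graph.Adj x y) ∧
      (∀ x ∈ B, (∃ c ∈ C, O.graph.Adj x c) → ∀ c ∈ C, x < c)}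

/-- For any vertex at distance `j ≥ 1` from `v`, there is a neighbor at distance `j - 1`. -/
lemma exists_adj_dist_pred {V : Type} (G : SimpleGraph V) (hconn : G.Connected)
    (v u : V) (j : ℕ) (hj : 1 ≤ j) (h : G.dist v u = j) :
    ∃ w, G.Adj u w ∧ G.dist v w = j - 1 := by
  obtain ⟨p, hp⟩ := (hconn v u).exists_walk_length_eq_dist
  rw [h] at hp
  cases hq : p.reverse with
  | nil => exfalso; have := congrArg SimpleGraph.Walk.length hq; simp [hp] at this; omega
  | cons ha q =>
    rename_i w
    refine ⟨w, ha, ?_⟩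
    have h1 : G.dist v w ≤ j - 1 := by
      have : G.dist w v ≤ q.length := SimpleGraph.dist_le q
      have hl : q.length = j - 1 := by
        have := congrArg SimpleGraph.Walk.length hq
        simp [hp] at this; omega
      rw [SimpleGraph.dist_comm]; omega
    have h2 : j ≤ G.dist v w + 1 := by
      have := hconn.dist_triangle (u := v) (v := w) (w := u)
      rw [SimpleGraph.dist_eq_one_iff_adj.mpr ha.symm] at this
      omega
    omega

/-- The key lemma: in a connected chordal ordered graph with minimum vertex `v`,
every vertex at BFS distance `j ≥ 1` has a *smaller* neighbor at distance `j - 1`. -/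
lemma exists_lt_adj_dist_pred {V : Type} [LinearOrder V] (G : SimpleGraph V)
    (hconn : G.Connected) (hchord : ChordalOrdered G) (v : V) (hv : ∀ u, v ≤ u) :
    ∀ j : ℕ, 1 ≤ j → ∀ u, G.dist v u = j →
      ∃ w, G.Adj u w ∧ G.dist v w = j - 1 ∧ w < u := by
  intro j
  induction j with
  | zero => omega
  | succ n ih =>
    intro _ u hu
    by_cases hn : n = 0
    · subst hn
      obtain ⟨w, hadj, hw⟩ := exists_adj_dist_pred G hconn v u 1 le_rfl hu
      simp only [Nat.sub_self] at hw
      have hwv : w = v := (hconn.dist_eq_zero_iff.mp hw).symm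
      subst hwv
      have : w ≠ u := fun h => by simp [h] at hu
      exact ⟨w, hadj, by simp, lt_of_le_of_ne (hv u) this⟩
    · obtain ⟨w, hadj, hw⟩ := exists_adj_dist_pred G hconn v u (n+1) (by omega) hu
      simp only [Nat.add_sub_cancel] at hw
      obtain ⟨x, hxadj, hxd, hxw⟩ := ih (by omega) w hw
      rcases lt_or_gt_of_ne (G.ne_of_adj hadj).symm with hlt | hgt
      · exact ⟨w, hadj, by simpa using hw, hlt⟩
      · exfalso
        have hux : u ≠ x := by
          intro h; rw [← h] at hxd; omega
        have : G.Adj u x := hchord hadj.symm hxadj hgt hxw hux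
        have h1 : G.dist v u ≤ G.dist v x + 1 := by
          have htri := hconn.dist_triangle (u := v) (v := x) (w := u)
          rw [SimpleGraph.dist_eq_one_iff_adj.mpr this.symm] at htri
          omega
        omega

/-- Let `G` be a connected chordal ordered graph with all left-degrees at most `d` (`d ≥ 1`),
`v` its smallest vertex and `λ(u) = d_G(v, u)` the BFS layering from `v`. Then for `j ≥ 1`,
every vertex `u` of the `j`-th layer has a neighbor `w` in layer `j − 1` with `w < u`, and
the induced ordered subgraph on the `j`-th layer belongs to `T_{d−1}`. -/
theorem stmt_16 {V : Type} [Fintype V] [LinearOrder V] (G : SimpleGraph V)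
    (d : ℕ) (hd : 1 ≤ d) (hconn : G.Connected) (hchord : ChordalOrdered G)
    (hdeg : ∀ u : V, ({w | G.Adj u w ∧ w < u}).ncard ≤ d)
    (v : V) (hv : ∀ u, v ≤ u) (j : ℕ) (hj : 1 ≤ j) :
    (∀ u : V, G.dist v u = j → ∃ w : V, G.Adj u w ∧ G.dist v w = j - 1 ∧ w < u) ∧
      OrderedGraph.induce { V := V, graph := G } {u | G.dist v u = j} ∈ Tclass (d - 1) :=  by
  have key := exists_lt_adj_dist_pred G hconn hchord v hv
  refine ⟨key j hj, ?_, ?_⟩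
  · -- chordality of the induced subgraph
    rintro ⟨a, ha⟩ ⟨b, hb⟩ ⟨c, hc⟩ hab hac hba hca hbc
    simp only [OrderedGraph.induce, SimpleGraph.comap_adj,
      Function.Embedding.coe_subtype] at hab hac ⊢
    exact hchord hab hac (by exact_mod_cast hba) (by exact_mod_cast hca)
      (fun h => hbc (Subtype.ext h))
  · -- left-degrees at most d - 1
    rintro ⟨u, hu⟩
    simp only [Set.mem_setOf_eq] at hu
    obtain ⟨w₀, hw₀adj, hw₀d, hw₀lt⟩ := key j hj u hu
    set A : Set V := {w | G.Adj u w ∧ w < u} with hA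
    have hw₀A : w₀ ∈ A := ⟨hw₀adj, hw₀lt⟩
    set T : Set ↥{x | G.dist v x = j} :=
      {x | (OrderedGraph.induce { V := V, graph := G } {x | G.dist v x = j}).graph.Adj ⟨u, hu⟩ x
        ∧ x < ⟨u, hu⟩} with hT
    have himg : Subtype.val '' T ⊆ A \ {w₀} := by
      rintro _ ⟨⟨x, hx⟩, hxT, rfl⟩
      obtain ⟨hadj, hlt⟩ := hxT
      simp only [OrderedGraph.induce, SimpleGraph.comap_adj,
        Function.Embedding.coe_subtype] at hadj
      refine ⟨⟨hadj, by exact_mod_cast hlt⟩, ?_⟩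
      simp only [Set.mem_singleton_iff]
      intro h
      simp only [Set.mem_setOf_eq] at hx
      rw [h, hw₀d] at hx
      omega
    have h1 : T.ncard = (Subtype.val '' T).ncard :=
      (Set.ncard_image_of_injective T Subtype.val_injective).symm
    have h2 : (Subtype.val '' T).ncard ≤ (A \ {w₀}).ncard :=
      Set.ncard_le_ncard himg (A \ {w₀}).toFinite
    have h3 : (A \ {w₀}).ncard = A.ncard - 1 := by
      rw [Set.ncard_diff_singleton_of_mem hw₀A]
    have h4 : A.ncard ≤ d := hdeg u
    calc T.ncard = (Subtype.val '' T).ncard := h1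
      _ ≤ (A \ {w₀}).ncard := h2
      _ = A.ncard - 1 := h3
      _ ≤ d - 1 := Nat.sub_le_sub_right h4 1
end
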